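/- For any positive integer λ and G(ψ) = cos(λψ + ψ₀), the function J_λ = (p_r + (p_ψ/(λr)) ∂/∂ψ)^λ G is a first integral of the geodesic Hamiltonian H_g = ½(p_r² + p_ψ²/r²), i.e., {H_g, J_λ} = 0. -/

import Mathlib

open Real

/- Phase space coordinates: `x 0 = r`, `x 1 = ψ`, `x 2 = p_r`, `x 3 = p_ψ`. -/

/-- Partial derivative with respect to the `i`-th coordinate. -/
noncomputable def pd (i : Fin 4) (f : (Fin 4 → ℝ) → ℝ) (x : Fin 4 → ℝ) : ℝ :=
  deriv (fun t => f (Function.update x i t)) (x i)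

/-- The angular Hamiltonian `L = ½ p_ψ² + F(ψ)`. -/
noncomputable def Lfun (F : ℝ → ℝ) (x : Fin 4 → ℝ) : ℝ :=
  (1/2) * (x 3)^2 + F (x 1)

/-- The Hamiltonian vector field `X_L = p_ψ ∂/∂ψ − F'(ψ) ∂/∂p_ψ` as an operator. -/
noncomputable def XL (F : ℝ → ℝ) (f : (Fin 4 → ℝ) → ℝ) (x : Fin 4 → ℝ) : ℝ :=
  x 3 * pd 1 f x - deriv F (x 1) * pd 3 f x

/-- The Hamiltonian `H = ½ p_r² + (½ p_ψ² + F(ψ))/r²`. -/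
noncomputable def Hfun (F : ℝ → ℝ) (x : Fin 4 → ℝ) : ℝ :=
  (1/2) * (x 2)^2 + (1 / (x 0)^2) * ((1/2) * (x 3)^2 + F (x 1))

/-- Standard Poisson bracket on the phase space `(r, ψ, p_r, p_ψ)`. -/
noncomputable def poisson (f g : (Fin 4 → ℝ) → ℝ) (x : Fin 4 → ℝ) : ℝ :=
  (pd 0 f x * pd 2 g x - pd 2 f x * pd 0 g x) +
  (pd 1 f x * pd 3 g x - pd 3 f x * pd 1 g x)

/-- The operator `p_r + (p_ψ/(λr)) ∂/∂ψ`. -/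
noncomputable def Vop (lam : ℕ) (f : (Fin 4 → ℝ) → ℝ) (x : Fin 4 → ℝ) : ℝ :=
  x 2 * f x + (x 3 / (lam * x 0)) * pd 1 f x

noncomputable def Jc (lam : ℕ) (ψ₀ : ℝ) (n : ℕ) (x : Fin 4 → ℝ) : ℝ :=
  ((((x 2 : ℂ) + Complex.I * ((x 3 : ℂ) * ((x 0 : ℂ))⁻¹)) ^ n) *
    Complex.exp (((lam * x 1 + ψ₀ : ℝ) : ℂ) * Complex.I)).re

lemma pd1_Jc (lam : ℕ) (ψ₀ : ℝ) (n : ℕ) (x : Fin 4 → ℝ) :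
    pd 1 (Jc lam ψ₀ n) x =
      ((((x 2 : ℂ) + Complex.I * ((x 3 : ℂ) * ((x 0 : ℂ))⁻¹)) ^ n) *
        (Complex.exp (((lam * x 1 + ψ₀ : ℝ) : ℂ) * Complex.I) * ((lam : ℂ) * Complex.I))).re := by
  set z : ℂ := (x 2 : ℂ) + Complex.I * ((x 3 : ℂ) * ((x 0 : ℂ))⁻¹) with hz
  have h1 : HasDerivAt (fun w : ℂ => ((lam : ℂ) * w + (ψ₀ : ℂ)) * Complex.I)
      ((lam : ℂ) * Complex.I) ((x 1 : ℝ) : ℂ) := by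
    simpa using (((hasDerivAt_id ((x 1 : ℝ) : ℂ)).const_mul (lam : ℂ)).add_const
      (ψ₀ : ℂ)).mul_const Complex.I
  have h2 : HasDerivAt (fun w : ℂ => z ^ n * Complex.exp (((lam : ℂ) * w + (ψ₀ : ℂ)) * Complex.I))
      (z ^ n * (Complex.exp (((lam : ℂ) * (x 1 : ℝ) + (ψ₀ : ℂ)) * Complex.I) *
        ((lam : ℂ) * Complex.I))) ((x 1 : ℝ) : ℂ) := h1.cexp.const_mul _
  have h3 := h2.real_of_complex
  have hfun : (fun t => Jc lam ψ₀ n (Function.update x 1 t)) =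
      fun t : ℝ => (((fun w : ℂ => z ^ n * Complex.exp (((lam : ℂ) * w + (ψ₀ : ℂ)) * Complex.I))) ↑t).re := by
    funext t
    simp [Jc, Function.update, hz]
  rw [pd, hfun, h3.deriv]
  congr 2
  push_cast
  ring

lemma iter_eq (lam : ℕ) (hlam : 0 < lam) (ψ₀ : ℝ) :
    ∀ (n : ℕ) (x : Fin 4 → ℝ), x 0 ≠ 0 →
      (Vop lam)^[n] (fun y => cos (lam * y 1 + ψ₀)) x = Jc lam ψ₀ n x := by
  intro n
  induction n with
  | zero =>
    intro x hx0
    have h := Complex.exp_ofReal_mul_I_re ((lam : ℝ) * x 1 + ψ₀)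
    push_cast at h
    simp [Jc]
    rw [h]
  | succ n ih =>
    intro x hx0
    rw [Function.iterate_succ_apply']
    have hpd : pd 1 ((Vop lam)^[n] (fun y => cos (lam * y 1 + ψ₀))) x = pd 1 (Jc lam ψ₀ n) x := by
      unfold pd
      congr 1
      funext t
      apply ih
      simpa using hx0
    rw [Vop, hpd, ih x hx0, pd1_Jc]
    simp only [Jc]
    show _ = (((x 2 : ℂ) + Complex.I * ((x 3 : ℂ) * ((x 0 : ℂ))⁻¹)) ^ (n+1) *
      Complex.exp (((lam * x 1 + ψ₀ : ℝ) : ℂ) * Complex.I)).re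
    rw [← Complex.re_ofReal_mul, ← Complex.re_ofReal_mul, ← Complex.add_re]
    congr 1
    have hx0' : ((x 0 : ℝ) : ℂ) ≠ 0 := by exact_mod_cast hx0
    have hlam' : ((lam : ℕ) : ℂ) ≠ 0 := by exact_mod_cast hlam.ne'
    push_cast
    field_simp
    have hu' : (x 0 : ℂ) * ((x 0 : ℂ))⁻¹ = 1 := mul_inv_cancel₀ hx0'
    linear_combination (-((x 2 : ℂ) * (x 0 : ℂ) + Complex.I * (x 3 : ℂ)) *
      ((x 2 : ℂ) * (x 0 : ℂ) * ((x 0 : ℂ))⁻¹ + Complex.I * (x 3 : ℂ) * ((x 0 : ℂ))⁻¹) ^ n) * hu'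

lemma pd0_Jc (lam : ℕ) (ψ₀ : ℝ) (n : ℕ) (x : Fin 4 → ℝ) (hx0 : x 0 ≠ 0) :
    pd 0 (Jc lam ψ₀ n) x =
      (-(n : ℂ) * (((x 2 : ℂ) + Complex.I * ((x 3 : ℂ) * ((x 0 : ℂ))⁻¹)) ^ (n - 1)) *
        Complex.I * (x 3 : ℂ) * (((x 0 : ℂ)) ^ 2)⁻¹ *
        Complex.exp (((lam * x 1 + ψ₀ : ℝ) : ℂ) * Complex.I)).re := by
  have hx0' : ((x 0 : ℝ) : ℂ) ≠ 0 := by exact_mod_cast hx0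
  set E : ℂ := Complex.exp (((lam * x 1 + ψ₀ : ℝ) : ℂ) * Complex.I) with hE
  have h : HasDerivAt (fun w : ℂ => ((x 2 : ℂ) + Complex.I * ((x 3 : ℂ) * w⁻¹)) ^ n * E)
      ((n : ℂ) * (((x 2 : ℂ) + Complex.I * ((x 3 : ℂ) * (((x 0 : ℝ) : ℂ))⁻¹)) ^ (n - 1)) *
        (Complex.I * ((x 3 : ℂ) * (-((((x 0 : ℝ) : ℂ)) ^ 2)⁻¹))) * E) ((x 0 : ℝ) : ℂ) := by
    exact (((((hasDerivAt_inv hx0').const_mul (x 3 : ℂ)).const_mul Complex.I).const_add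
      (x 2 : ℂ)).pow n).mul_const E
  have h3 := h.real_of_complex
  have hfun : (fun t => Jc lam ψ₀ n (Function.update x 0 t)) =
      fun t : ℝ => (((fun w : ℂ => ((x 2 : ℂ) + Complex.I * ((x 3 : ℂ) * w⁻¹)) ^ n * E)) ↑t).re := by
    funext t
    simp [Jc, Function.update, hE]
  rw [pd, hfun, h3.deriv]
  congr 1
  ring

lemma pd2_Jc (lam : ℕ) (ψ₀ : ℝ) (n : ℕ) (x : Fin 4 → ℝ) :
    pd 2 (Jc lam ψ₀ n) x =
      ((n : ℂ) * (((x 2 : ℂ) + Complex.I * ((x 3 : ℂ) * ((x 0 : ℂ))⁻¹)) ^ (n - 1)) *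
        Complex.exp (((lam * x 1 + ψ₀ : ℝ) : ℂ) * Complex.I)).re := by
  set E : ℂ := Complex.exp (((lam * x 1 + ψ₀ : ℝ) : ℂ) * Complex.I) with hE
  have h : HasDerivAt (fun w : ℂ => (w + Complex.I * ((x 3 : ℂ) * ((x 0 : ℂ))⁻¹)) ^ n * E)
      ((n : ℂ) * (((((x 2 : ℝ) : ℂ)) + Complex.I * ((x 3 : ℂ) * ((x 0 : ℂ))⁻¹)) ^ (n - 1)) * 1 * E)
      ((x 2 : ℝ) : ℂ) :=
    (((hasDerivAt_id _).add_const _).pow n).mul_const E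
  have h3 := h.real_of_complex
  have hfun : (fun t => Jc lam ψ₀ n (Function.update x 2 t)) =
      fun t : ℝ => (((fun w : ℂ => (w + Complex.I * ((x 3 : ℂ) * ((x 0 : ℂ))⁻¹)) ^ n * E)) ↑t).re := by
    funext t
    simp [Jc, Function.update, hE]
  rw [pd, hfun, h3.deriv]
  congr 1
  ring

lemma pd3_Jc (lam : ℕ) (ψ₀ : ℝ) (n : ℕ) (x : Fin 4 → ℝ) :
    pd 3 (Jc lam ψ₀ n) x =
      ((n : ℂ) * (((x 2 : ℂ) + Complex.I * ((x 3 : ℂ) * ((x 0 : ℂ))⁻¹)) ^ (n - 1)) *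
        Complex.I * ((x 0 : ℂ))⁻¹ *
        Complex.exp (((lam * x 1 + ψ₀ : ℝ) : ℂ) * Complex.I)).re := by
  set E : ℂ := Complex.exp (((lam * x 1 + ψ₀ : ℝ) : ℂ) * Complex.I) with hE
  have h : HasDerivAt (fun w : ℂ => ((x 2 : ℂ) + Complex.I * (w * ((x 0 : ℂ))⁻¹)) ^ n * E)
      ((n : ℂ) * (((x 2 : ℂ) + Complex.I * ((((x 3 : ℝ) : ℂ)) * ((x 0 : ℂ))⁻¹)) ^ (n - 1)) *
        (Complex.I * (1 * ((x 0 : ℂ))⁻¹)) * E) ((x 3 : ℝ) : ℂ) :=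
    (((((hasDerivAt_id _).mul_const _).const_mul Complex.I).const_add (x 2 : ℂ)).pow n).mul_const E
  have h3 := h.real_of_complex
  have hfun : (fun t => Jc lam ψ₀ n (Function.update x 3 t)) =
      fun t : ℝ => (((fun w : ℂ => ((x 2 : ℂ) + Complex.I * (w * ((x 0 : ℂ))⁻¹)) ^ n * E)) ↑t).re := by
    funext t
    simp [Jc, Function.update, hE]
  rw [pd, hfun, h3.deriv]
  congr 1
  ring

noncomputable def Hg : (Fin 4 → ℝ) → ℝ := fun y => (1/2) * ((y 2)^2 + (y 3)^2 / (y 0)^2)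

lemma pd0_H (x : Fin 4 → ℝ) (hx0 : x 0 ≠ 0) : pd 0 Hg x = -(x 3)^2 / (x 0)^3 := by
  have h2 : (x 0) ^ 2 ≠ 0 := pow_ne_zero 2 hx0
  have h : HasDerivAt (fun t : ℝ => (1/2) * ((x 2)^2 + (x 3)^2 * ((t)^2)⁻¹))
      ((1/2) * ((x 3)^2 * (-(2 * (x 0) ^ (2-1)) / ((x 0)^2)^2))) (x 0) :=
    ((((hasDerivAt_pow 2 (x 0)).inv h2).const_mul ((x 3)^2)).const_add ((x 2)^2)).const_mul (1/2)
  have hfun : (fun t => Hg (Function.update x 0 t)) =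
      fun t : ℝ => (1/2) * ((x 2)^2 + (x 3)^2 * ((t)^2)⁻¹) := by
    funext t
    simp [Hg, Function.update, div_eq_mul_inv]
  rw [pd, hfun, h.deriv]
  field_simp
  ring

lemma pd1_H (x : Fin 4 → ℝ) : pd 1 Hg x = 0 := by
  have hfun : (fun t => Hg (Function.update x 1 t)) =
      fun _ : ℝ => (1/2) * ((x 2)^2 + (x 3)^2 / (x 0)^2) := by
    funext t
    simp [Hg, Function.update]
  rw [pd, hfun, deriv_const]

lemma pd2_H (x : Fin 4 → ℝ) : pd 2 Hg x = x 2 := by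
  have h : HasDerivAt (fun t : ℝ => (1/2) * (t^2 + (x 3)^2 / (x 0)^2))
      ((1/2) * (2 * (x 2) ^ (2-1))) (x 2) :=
    ((hasDerivAt_pow 2 (x 2)).add_const _).const_mul (1/2)
  have hfun : (fun t => Hg (Function.update x 2 t)) =
      fun t : ℝ => (1/2) * (t^2 + (x 3)^2 / (x 0)^2) := by
    funext t
    simp [Hg, Function.update]
  rw [pd, hfun, h.deriv]
  ring

lemma pd3_H (x : Fin 4 → ℝ) : pd 3 Hg x = x 3 / (x 0)^2 := by
  have h : HasDerivAt (fun t : ℝ => (1/2) * ((x 2)^2 + t^2 * ((x 0)^2)⁻¹))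
      ((1/2) * ((2 * (x 3) ^ (2-1)) * ((x 0)^2)⁻¹)) (x 3) :=
    (((hasDerivAt_pow 2 (x 3)).mul_const _).const_add _).const_mul (1/2)
  have hfun : (fun t => Hg (Function.update x 3 t)) =
      fun t : ℝ => (1/2) * ((x 2)^2 + t^2 * ((x 0)^2)⁻¹) := by
    funext t
    simp [Hg, Function.update, div_eq_mul_inv]
  rw [pd, hfun, h.deriv]
  field_simp
  norm_num

/-- For any positive integer `λ` and `G(ψ) = cos(λψ + ψ₀)`, the function
`J_λ = (p_r + (p_ψ/(λr))∂/∂ψ)^λ G` is a first integral of the geodesic Hamiltonian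
`H_g = ½(p_r² + p_ψ²/r²)`. -/
theorem geodesic_first_integral (lam : ℕ) (hlam : 0 < lam) (ψ₀ : ℝ)
    (x : Fin 4 → ℝ) (hr : 0 < x 0) :
    poisson (fun y => (1/2) * ((y 2)^2 + (y 3)^2 / (y 0)^2))
      ((Vop lam)^[lam] (fun y => cos (lam * y 1 + ψ₀))) x = 0 := by
  have hx0 : x 0 ≠ 0 := hr.ne'
  set G : (Fin 4 → ℝ) → ℝ := fun y => cos (lam * y 1 + ψ₀) with hG
  set J : (Fin 4 → ℝ) → ℝ := (Vop lam)^[lam] G with hJ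
  have e1 : pd 1 J x = pd 1 (Jc lam ψ₀ lam) x := by
    unfold pd; congr 1; funext t
    exact iter_eq lam hlam ψ₀ lam _ (by simpa using hx0)
  have e2 : pd 2 J x = pd 2 (Jc lam ψ₀ lam) x := by
    unfold pd; congr 1; funext t
    exact iter_eq lam hlam ψ₀ lam _ (by simpa using hx0)
  have e3 : pd 3 J x = pd 3 (Jc lam ψ₀ lam) x := by
    unfold pd; congr 1; funext t
    exact iter_eq lam hlam ψ₀ lam _ (by simpa using hx0)
  have e0 : pd 0 J x = pd 0 (Jc lam ψ₀ lam) x := by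
    unfold pd
    have heq : (fun t => J (Function.update x 0 t)) =ᶠ[nhds (x 0)]
        (fun t => Jc lam ψ₀ lam (Function.update x 0 t)) := by
      filter_upwards [eventually_ne_nhds hx0] with t ht
      exact iter_eq lam hlam ψ₀ lam _ (by simpa using ht)
    exact heq.deriv_eq
  have hH : (fun y : Fin 4 → ℝ => (1/2) * ((y 2)^2 + (y 3)^2 / (y 0)^2)) = Hg := rfl
  rw [poisson, hH, pd0_H x hx0, pd1_H, pd2_H, pd3_H, e0, e1, e2, e3,
    pd0_Jc lam ψ₀ lam x hx0, pd1_Jc, pd2_Jc, pd3_Jc]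
  rw [← Complex.re_ofReal_mul, ← Complex.re_ofReal_mul, ← Complex.re_ofReal_mul,
    ← Complex.re_ofReal_mul, ← Complex.sub_re, ← Complex.sub_re, ← Complex.add_re]
  obtain ⟨m, rfl⟩ : ∃ m, lam = m + 1 := ⟨lam - 1, (Nat.succ_pred_eq_of_pos hlam).symm⟩
  have hx0' : ((x 0 : ℝ) : ℂ) ≠ 0 := by exact_mod_cast hx0
  convert Complex.zero_re using 2
  simp only [Nat.add_sub_cancel]
  push_cast
  field_simp
  ring_nf
  simp only [Complex.I_sq]
  have hu' : (x 0 : ℂ) * ((x 0 : ℂ))⁻¹ = 1 := mul_inv_cancel₀ hx0'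
  generalize ((x 0 : ℂ))⁻¹ = u at hu' ⊢
  linear_combination (((m : ℂ) + 1) *
    Complex.exp ((m : ℂ) * Complex.I * (x 1 : ℂ) + Complex.I * (x 1 : ℂ) + Complex.I * (ψ₀ : ℂ)) *
    (x 3 : ℂ) * (Complex.I * (x 3 : ℂ) * u + (x 0 : ℂ) * (x 2 : ℂ) * u) ^ m *
    ((x 3 : ℂ) - Complex.I * (x 0 : ℂ) * (x 2 : ℂ))) * hu'
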